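/- Rate stability from linear second-moment growth and bounded increment variance: Let Q(t) ≥ 0 be a stochastic process such that (i) there exist a finite C > 0 and a positive integer t* with E[Q(t)²] ≤ Ct for all t ≥ t*, and (ii) there is a finite D > 0 with E[(Q(t+1) − Q(t))²] ≤ D for all t. Then lim_{t→∞} Q(t)/t = 0 with probability 1. -/

import Mathlib

open MeasureTheory ProbabilityTheory Filter Topology

namespace RateStabAux

/-- Sampling times `⌊n^{3/2}⌋`. -/
def TT (n : ℕ) : ℕ := Nat.sqrt (n ^ 3)

lemma TT_mono : Monotone TT := fun a b h => Nat.sqrt_le_sqrt (Nat.pow_le_pow_left h 3)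

lemma le_TT (n : ℕ) : n ≤ TT n := by
  rcases Nat.eq_zero_or_pos n with h | h
  · simp [h, TT]
  · exact Nat.le_sqrt.mpr (by nlinarith)

lemma TT_le_rpow (n : ℕ) : (TT n : ℝ) ≤ (n : ℝ) ^ ((3:ℝ)/2) := by
  have h1 : ((TT n : ℝ)) ^ 2 ≤ ((n:ℝ)) ^ 3 := by
    exact_mod_cast (Nat.sqrt_le' (n ^ 3) : Nat.sqrt (n ^ 3) ^ 2 ≤ n ^ 3)
  have h2 : ((n:ℝ) ^ ((3:ℝ)/2)) ^ 2 = (n:ℝ) ^ 3 := by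
    rw [← Real.rpow_natCast ((n:ℝ) ^ ((3:ℝ)/2)) 2, ← Real.rpow_mul (Nat.cast_nonneg n)]
    norm_num
  refine le_of_pow_le_pow_left₀ two_ne_zero (by positivity) ?_
  rw [h2]; exact h1

lemma rpow_le_TT (n : ℕ) : (n : ℝ) ^ ((3:ℝ)/2) ≤ (TT n : ℝ) + 1 := by
  have h1 : ((n:ℝ)) ^ 3 ≤ ((TT n : ℝ) + 1) ^ 2 := by
    have := Nat.lt_succ_sqrt' (n ^ 3)
    have h : (n:ℝ) ^ 3 ≤ ((Nat.succ (Nat.sqrt (n ^ 3)) : ℕ) : ℝ) ^ 2 := by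
      exact_mod_cast this.le
    simpa [TT, Nat.succ_eq_add_one] using h
  have h2 : ((n:ℝ) ^ ((3:ℝ)/2)) ^ 2 = (n:ℝ) ^ 3 := by
    rw [← Real.rpow_natCast ((n:ℝ) ^ ((3:ℝ)/2)) 2, ← Real.rpow_mul (Nat.cast_nonneg n)]
    norm_num
  refine le_of_pow_le_pow_left₀ two_ne_zero (by positivity) ?_
  rw [h2]; exact h1

lemma rpow_three_halves (a : ℝ) (ha : 0 ≤ a) : a ^ ((3:ℝ)/2) = (Real.sqrt a) ^ 3 := by
  rw [show (3:ℝ)/2 = (1/2) * 3 by ring, Real.rpow_mul ha, ← Real.sqrt_eq_rpow,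
    ← Real.rpow_natCast (Real.sqrt a) 3]
  norm_num

lemma gap_bound (n : ℕ) (hn : 1 ≤ n) :
    ((TT (n+1) - TT n : ℕ) : ℝ) ≤ 4 * (n:ℝ) ^ ((1:ℝ)/2) := by
  have hmono : TT n ≤ TT (n+1) := TT_mono (Nat.le_succ n)
  rw [Nat.cast_sub hmono]
  set x := Real.sqrt ((n:ℝ) + 1) with hx
  set y := Real.sqrt (n:ℝ) with hy
  have hy1 : 1 ≤ y := by
    rw [hy, show (1:ℝ) = Real.sqrt 1 by simp]
    exact Real.sqrt_le_sqrt (by exact_mod_cast hn)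
  have hx0 : 0 ≤ x := Real.sqrt_nonneg _
  have hx2 : x ^ 2 = (n:ℝ) + 1 := Real.sq_sqrt (by positivity)
  have hy2 : y ^ 2 = (n:ℝ) := Real.sq_sqrt (by positivity)
  have hkey : x ^ 3 ≤ y ^ 3 + 3 * y := by
    have h6 : (x ^ 3) ^ 2 ≤ (y ^ 3 + 3 * y) ^ 2 := by
      have hxy : x ^ 2 = y ^ 2 + 1 := by rw [hx2, hy2]
      have e : (x ^ 3) ^ 2 = (y ^ 2 + 1) ^ 3 := by rw [show (x^3)^2 = (x^2)^3 by ring, hxy]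
      rw [e]; nlinarith [hy1, sq_nonneg y]
    exact le_of_pow_le_pow_left₀ two_ne_zero (by positivity) h6
  have e1 : ((n:ℝ) + 1) ^ ((3:ℝ)/2) = x ^ 3 := rpow_three_halves _ (by positivity)
  have e2 : (n:ℝ) ^ ((3:ℝ)/2) = y ^ 3 := rpow_three_halves _ (by positivity)
  have e3 : (n:ℝ) ^ ((1:ℝ)/2) = y := by rw [hy, Real.sqrt_eq_rpow]
  have hub : (TT (n+1) : ℝ) ≤ x ^ 3 := by
    have := TT_le_rpow (n+1)
    rw [← e1]; push_cast at this ⊢; exact this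
  have hlb : y ^ 3 - 1 ≤ (TT n : ℝ) := by
    have := rpow_le_TT n
    rw [e2] at this; linarith
  rw [e3]
  linarith [hkey, hub, hlb, hy1]

lemma exists_block (N t : ℕ) (ht : TT N ≤ t) : ∃ n, N ≤ n ∧ TT n ≤ t ∧ t < TT (n+1) := by
  classical
  set n := Nat.findGreatest (fun m => TT m ≤ t) t with hn
  have hNt : N ≤ t := le_trans (le_TT N) ht
  refine ⟨n, Nat.le_findGreatest hNt ht, Nat.findGreatest_spec (P := fun m => TT m ≤ t) hNt ht, ?_⟩
  by_contra h
  push_neg at h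
  exact Nat.findGreatest_is_greatest (Nat.lt_succ_self n) (le_trans (le_TT (n+1)) h) h

end RateStabAux
namespace RateStabAux

lemma key_drift {ε : ℝ} (hε : 0 < ε) :
    ∀ᶠ n in atTop, ((TT (n+1) - TT n : ℕ) : ℝ) * ((TT (n+1) : ℝ)) ^ ((3:ℝ)/5)
      ≤ (ε/4) * (TT n : ℝ) := by
  have h10 : Tendsto (fun n : ℕ => ((n:ℝ)) ^ ((1:ℝ)/10)) atTop atTop :=
    (tendsto_rpow_atTop (by norm_num)).comp tendsto_natCast_atTop_atTop
  filter_upwards [eventually_ge_atTop 2, h10.eventually_ge_atTop (64/ε)] with n hn2 hn10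
  have hn1 : (1:ℝ) ≤ (n:ℝ) := by exact_mod_cast le_trans (by norm_num) hn2
  have hnpos : (0:ℝ) < (n:ℝ) := by linarith
  -- gap bound
  have hgap : ((TT (n+1) - TT n : ℕ) : ℝ) ≤ 4 * (n:ℝ) ^ ((1:ℝ)/2) :=
    gap_bound n (le_trans (by norm_num) hn2)
  -- bound on (TT (n+1))^{3/5}
  have hTub : (TT (n+1) : ℝ) ≤ ((n:ℝ) + 1) ^ ((3:ℝ)/2) := by
    have := TT_le_rpow (n+1); push_cast at this; exact this
  have hc1 : ((TT (n+1) : ℝ)) ^ ((3:ℝ)/5) ≤ (((n:ℝ) + 1) ^ ((3:ℝ)/2)) ^ ((3:ℝ)/5) :=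
    Real.rpow_le_rpow (Nat.cast_nonneg _) hTub (by norm_num)
  have hc2 : (((n:ℝ) + 1) ^ ((3:ℝ)/2)) ^ ((3:ℝ)/5) = ((n:ℝ) + 1) ^ ((9:ℝ)/10) := by
    rw [← Real.rpow_mul (by positivity)]; norm_num
  have hc3 : ((n:ℝ) + 1) ^ ((9:ℝ)/10) ≤ (2 * (n:ℝ)) ^ ((9:ℝ)/10) :=
    Real.rpow_le_rpow (by positivity) (by linarith) (by norm_num)
  have hc4 : (2 * (n:ℝ)) ^ ((9:ℝ)/10) = 2 ^ ((9:ℝ)/10) * (n:ℝ) ^ ((9:ℝ)/10) :=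
    Real.mul_rpow (by norm_num) hnpos.le
  have hc5 : (2:ℝ) ^ ((9:ℝ)/10) ≤ 2 := by
    have := Real.rpow_le_rpow_of_exponent_le (x := 2) (by norm_num)
      (show (9:ℝ)/10 ≤ 1 by norm_num)
    simpa using this
  have hcfin : ((TT (n+1) : ℝ)) ^ ((3:ℝ)/5) ≤ 2 * (n:ℝ) ^ ((9:ℝ)/10) := by
    have h9 : (0:ℝ) ≤ (n:ℝ) ^ ((9:ℝ)/10) := Real.rpow_nonneg hnpos.le _
    calc ((TT (n+1) : ℝ)) ^ ((3:ℝ)/5) ≤ ((n:ℝ) + 1) ^ ((9:ℝ)/10) := by rw [← hc2]; exact hc1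
      _ ≤ 2 ^ ((9:ℝ)/10) * (n:ℝ) ^ ((9:ℝ)/10) := by rw [← hc4]; exact hc3
      _ ≤ 2 * (n:ℝ) ^ ((9:ℝ)/10) := by nlinarith [hc5, h9]
  -- LHS ≤ 8 n^{7/5}
  have hhalf : (0:ℝ) ≤ (n:ℝ) ^ ((1:ℝ)/2) := Real.rpow_nonneg hnpos.le _
  have hLHS : ((TT (n+1) - TT n : ℕ) : ℝ) * ((TT (n+1) : ℝ)) ^ ((3:ℝ)/5)
      ≤ 8 * (n:ℝ) ^ ((7:ℝ)/5) := by
    have hmul : ((TT (n+1) - TT n : ℕ) : ℝ) * ((TT (n+1) : ℝ)) ^ ((3:ℝ)/5)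
        ≤ (4 * (n:ℝ) ^ ((1:ℝ)/2)) * (2 * (n:ℝ) ^ ((9:ℝ)/10)) := by
      apply mul_le_mul hgap hcfin (Real.rpow_nonneg (Nat.cast_nonneg _) _) (by positivity)
    have heq : (n:ℝ) ^ ((1:ℝ)/2) * (n:ℝ) ^ ((9:ℝ)/10) = (n:ℝ) ^ ((7:ℝ)/5) := by
      rw [← Real.rpow_add hnpos]; norm_num
    calc ((TT (n+1) - TT n : ℕ) : ℝ) * ((TT (n+1) : ℝ)) ^ ((3:ℝ)/5)
        ≤ (4 * (n:ℝ) ^ ((1:ℝ)/2)) * (2 * (n:ℝ) ^ ((9:ℝ)/10)) := hmul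
      _ = 8 * ((n:ℝ) ^ ((1:ℝ)/2) * (n:ℝ) ^ ((9:ℝ)/10)) := by ring
      _ = 8 * (n:ℝ) ^ ((7:ℝ)/5) := by rw [heq]
  -- RHS ≥ (ε/8) n^{3/2}
  have hT2 : (2:ℝ) ≤ (n:ℝ) ^ ((3:ℝ)/2) := by
    have h1 : (2:ℝ) ^ ((3:ℝ)/2) ≤ (n:ℝ) ^ ((3:ℝ)/2) :=
      Real.rpow_le_rpow (by norm_num) (by exact_mod_cast hn2) (by norm_num)
    have h2 : (2:ℝ) ≤ (2:ℝ) ^ ((3:ℝ)/2) := by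
      have := Real.rpow_le_rpow_of_exponent_le (x := 2) (by norm_num)
        (show (1:ℝ) ≤ (3:ℝ)/2 by norm_num)
      simpa using this
    linarith
  have hTlb : (n:ℝ) ^ ((3:ℝ)/2) / 2 ≤ (TT n : ℝ) := by
    have := rpow_le_TT n
    linarith
  -- final comparison
  have hsplit : (n:ℝ) ^ ((3:ℝ)/2) = (n:ℝ) ^ ((7:ℝ)/5) * (n:ℝ) ^ ((1:ℝ)/10) := by
    rw [← Real.rpow_add hnpos]; norm_num
  have h75 : (0:ℝ) ≤ (n:ℝ) ^ ((7:ℝ)/5) := Real.rpow_nonneg hnpos.le _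
  have hfin : 8 * (n:ℝ) ^ ((7:ℝ)/5) ≤ (ε/4) * ((n:ℝ) ^ ((3:ℝ)/2) / 2) := by
    rw [hsplit]
    have : (64/ε) * (n:ℝ) ^ ((7:ℝ)/5) ≤ (n:ℝ) ^ ((1:ℝ)/10) * (n:ℝ) ^ ((7:ℝ)/5) :=
      mul_le_mul_of_nonneg_right hn10 h75
    have h8 : 8 * (n:ℝ) ^ ((7:ℝ)/5) = (ε/8) * ((64/ε) * (n:ℝ) ^ ((7:ℝ)/5)) := by
      field_simp
      ring
    rw [h8]
    calc (ε/8) * ((64/ε) * (n:ℝ) ^ ((7:ℝ)/5))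
        ≤ (ε/8) * ((n:ℝ) ^ ((1:ℝ)/10) * (n:ℝ) ^ ((7:ℝ)/5)) := by
          apply mul_le_mul_of_nonneg_left this (by positivity)
      _ = (ε/4) * ((n:ℝ) ^ ((7:ℝ)/5) * (n:ℝ) ^ ((1:ℝ)/10) / 2) := by ring
  calc ((TT (n+1) - TT n : ℕ) : ℝ) * ((TT (n+1) : ℝ)) ^ ((3:ℝ)/5)
      ≤ 8 * (n:ℝ) ^ ((7:ℝ)/5) := hLHS
    _ ≤ (ε/4) * ((n:ℝ) ^ ((3:ℝ)/2) / 2) := hfin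
    _ ≤ (ε/4) * (TT n : ℝ) := by
        apply mul_le_mul_of_nonneg_left hTlb (by positivity)

end RateStabAux
namespace RateStabAux

lemma det (f : ℕ → ℝ) (h0 : ∀ t, 0 ≤ f t)
    (hA : ∀ k : ℕ, ∀ᶠ n in atTop, f (TT n) ≤ (TT n : ℝ) / ((k:ℝ) + 1))
    (hB : ∀ᶠ s in atTop, |f (s+1) - f s| ≤ (s:ℝ) ^ ((3:ℝ)/5)) :
    Tendsto (fun t : ℕ => f t / (t:ℝ)) atTop (𝓝 0) := by
  rw [NormedAddCommGroup.tendsto_nhds_zero]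
  intro ε hε
  obtain ⟨k, hk⟩ := exists_nat_gt (4/ε)
  have hk' : 1/((k:ℝ)+1) ≤ ε/4 := by
    have h1 : 4/ε < (k:ℝ) + 1 := lt_trans hk (lt_add_one _)
    have h2 : 4 < ((k:ℝ)+1) * ε := (div_lt_iff₀ hε).1 h1
    have h3 : (0:ℝ) < (k:ℝ) + 1 := by positivity
    rw [div_le_div_iff₀ h3 (by norm_num)]
    nlinarith
  obtain ⟨N₁, hN₁⟩ := (hA k).exists_forall_of_atTop
  obtain ⟨N₂, hN₂⟩ := hB.exists_forall_of_atTop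
  obtain ⟨N₃, hN₃⟩ := (key_drift hε).exists_forall_of_atTop
  set N := N₁ + N₂ + N₃ + 1 with hN
  filter_upwards [eventually_ge_atTop (TT N + 1)] with t ht
  have htN : TT N ≤ t := le_trans (Nat.le_succ _) ht
  obtain ⟨n, hNn, hbl, hbr⟩ := exists_block N t htN
  have htpos : 0 < t := lt_of_lt_of_le (Nat.succ_pos _) (le_trans (Nat.succ_le_succ (Nat.zero_le _)) ht)
  have htposR : (0:ℝ) < (t:ℝ) := by exact_mod_cast htpos
  -- telescoping bound
  have htel : f t ≤ f (TT n) + ∑ s ∈ Finset.Ico (TT n) t, |f (s+1) - f s| := by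
    have h1 : ∑ s ∈ Finset.Ico (TT n) t, (f (s+1) - f s) = f t - f (TT n) := by
      rw [Finset.sum_Ico_eq_sub _ hbl, Finset.sum_range_sub, Finset.sum_range_sub]
      ring
    have h2 : ∑ s ∈ Finset.Ico (TT n) t, (f (s+1) - f s)
        ≤ ∑ s ∈ Finset.Ico (TT n) t, |f (s+1) - f s| :=
      Finset.sum_le_sum (fun s _ => le_abs_self _)
    linarith
  -- bound on the sum of increments
  have hsum : ∑ s ∈ Finset.Ico (TT n) t, |f (s+1) - f s|
      ≤ ((TT (n+1) - TT n : ℕ) : ℝ) * ((TT (n+1) : ℝ)) ^ ((3:ℝ)/5) := by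
    have hterm : ∀ s ∈ Finset.Ico (TT n) t,
        |f (s+1) - f s| ≤ ((TT (n+1) : ℝ)) ^ ((3:ℝ)/5) := by
      intro s hs
      rw [Finset.mem_Ico] at hs
      have hsN₂ : N₂ ≤ s := by
        calc N₂ ≤ N := by omega
          _ ≤ n := hNn
          _ ≤ TT n := le_TT n
          _ ≤ s := hs.1
      have h1 : |f (s+1) - f s| ≤ (s:ℝ) ^ ((3:ℝ)/5) := hN₂ s hsN₂
      have h2 : (s:ℝ) ^ ((3:ℝ)/5) ≤ ((TT (n+1) : ℝ)) ^ ((3:ℝ)/5) := by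
        apply Real.rpow_le_rpow (Nat.cast_nonneg _) _ (by norm_num)
        exact_mod_cast Nat.le_of_lt (lt_trans hs.2 hbr)
      linarith
    calc ∑ s ∈ Finset.Ico (TT n) t, |f (s+1) - f s|
        ≤ ∑ _s ∈ Finset.Ico (TT n) t, ((TT (n+1) : ℝ)) ^ ((3:ℝ)/5) :=
          Finset.sum_le_sum hterm
      _ = ((t - TT n : ℕ) : ℝ) * ((TT (n+1) : ℝ)) ^ ((3:ℝ)/5) := by
          rw [Finset.sum_const, Nat.card_Ico, nsmul_eq_mul]
      _ ≤ ((TT (n+1) - TT n : ℕ) : ℝ) * ((TT (n+1) : ℝ)) ^ ((3:ℝ)/5) := by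
          apply mul_le_mul_of_nonneg_right _ (Real.rpow_nonneg (Nat.cast_nonneg _) _)
          exact_mod_cast Nat.sub_le_sub_right hbr.le (TT n)
  -- drift bound
  have hdrift : ((TT (n+1) - TT n : ℕ) : ℝ) * ((TT (n+1) : ℝ)) ^ ((3:ℝ)/5)
      ≤ (ε/4) * (TT n : ℝ) := hN₃ n (by omega)
  -- sample bound
  have hsamp : f (TT n) ≤ (ε/4) * (TT n : ℝ) := by
    have h1 : f (TT n) ≤ (TT n : ℝ) / ((k:ℝ) + 1) := hN₁ n (by omega)
    have h2 : (TT n : ℝ) / ((k:ℝ) + 1) = (TT n : ℝ) * (1/((k:ℝ)+1)) := by ring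
    have h3 : (TT n : ℝ) * (1/((k:ℝ)+1)) ≤ (TT n : ℝ) * (ε/4) :=
      mul_le_mul_of_nonneg_left hk' (Nat.cast_nonneg _)
    calc f (TT n) ≤ (TT n : ℝ) / ((k:ℝ) + 1) := h1
      _ = (TT n : ℝ) * (1/((k:ℝ)+1)) := h2
      _ ≤ (TT n : ℝ) * (ε/4) := h3
      _ = (ε/4) * (TT n : ℝ) := by ring
  have hTt : (TT n : ℝ) ≤ (t:ℝ) := by exact_mod_cast hbl
  have hft : f t ≤ (ε/2) * (t:ℝ) := by
    have : f t ≤ (ε/4) * (TT n : ℝ) + (ε/4) * (TT n : ℝ) := by linarith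
    have h4 : (ε/4) * (TT n : ℝ) ≤ (ε/4) * (t:ℝ) :=
      mul_le_mul_of_nonneg_left hTt (by positivity)
    linarith
  have hnorm : ‖f t / (t:ℝ)‖ = f t / (t:ℝ) := by
    rw [Real.norm_eq_abs, abs_of_nonneg (div_nonneg (h0 t) htposR.le)]
  rw [hnorm]
  have : f t / (t:ℝ) ≤ ε/2 := by
    rw [div_le_iff₀ htposR]
    linarith
  linarith

end RateStabAux
namespace RateStabAux2

variable {Ω : Type*} [MeasureSpace Ω] [IsProbabilityMeasure (ℙ : Measure Ω)]

lemma markov {f : Ω → ℝ} (h0 : ∀ ω, 0 ≤ f ω) (hi : Integrable f ℙ) {c : ℝ} (hc : 0 < c) :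
    (ℙ : Measure Ω) {ω | c < f ω} ≤ ENNReal.ofReal ((∫ ω, f ω) / c) := by
  have h1 := mul_meas_ge_le_integral_of_nonneg (μ := (ℙ : Measure Ω)) (ae_of_all _ h0) hi c
  have hm : (ℙ : Measure Ω) {ω | c < f ω} ≤ ℙ {ω | c ≤ f ω} :=
    measure_mono (fun ω (h : c < f ω) => (le_of_lt h : c ≤ f ω))
  rw [ENNReal.le_ofReal_iff_toReal_le (measure_ne_top _ _)
    (div_nonneg (integral_nonneg h0) hc.le)]
  calc ((ℙ : Measure Ω) {ω | c < f ω}).toReal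
      ≤ ((ℙ : Measure Ω) {ω | c ≤ f ω}).toReal :=
        ENNReal.toReal_mono (measure_ne_top _ _) hm
    _ ≤ (∫ ω, f ω) / c := by rw [le_div_iff₀ hc]; rw [measureReal_def] at h1; linarith

lemma borelcantelli {s : ℕ → Set Ω} {b : ℕ → ℝ} (hb0 : ∀ n, 0 ≤ b n)
    (hb : ∀ n, (ℙ : Measure Ω) (s n) ≤ ENNReal.ofReal (b n)) (hs : Summable b) :
    ∀ᵐ ω ∂(ℙ : Measure Ω), ∀ᶠ n in atTop, ω ∉ s n := by
  apply ae_eventually_notMem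
  have h1 : ∑' n, (ℙ : Measure Ω) (s n) ≤ ∑' n, ENNReal.ofReal (b n) := ENNReal.tsum_le_tsum hb
  have h2 : ∑' n, ENNReal.ofReal (b n) ≠ ⊤ := by
    rw [← ENNReal.ofReal_tsum_of_nonneg hb0 hs]
    exact ENNReal.ofReal_ne_top
  exact ne_top_of_le_ne_top h2 h1

lemma summable_aux {b : ℕ → ℝ} {c p : ℝ} (hp : 1 < p)
    (h : ∀ᶠ n in atTop, ‖b n‖ ≤ c * (1 / (n:ℝ) ^ p)) : Summable b := by
  refine Summable.of_norm_bounded_eventually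
    ((Real.summable_one_div_nat_rpow.mpr hp).mul_left c) ?_
  rwa [Nat.cofinite_eq_atTop]

end RateStabAux2
open RateStabAux RateStabAux2 in
/-- Rate stability from linear second-moment growth and bounded increment
variance: if `Q(t) ≥ 0`, `E[Q(t)²] ≤ Ct` for all `t ≥ t*`, and
`E[(Q(t+1) - Q(t))²] ≤ D` for all `t`, then `Q(t)/t → 0` with probability 1. -/
theorem rate_stability_from_linear_growth
    {Ω : Type*} [MeasureSpace Ω] [IsProbabilityMeasure (ℙ : Measure Ω)]
    (Q : ℕ → Ω → ℝ)
    (hmeas : ∀ t, Measurable (Q t))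
    (hpos : ∀ t ω, 0 ≤ Q t ω)
    (hint2 : ∀ t, Integrable (fun ω => (Q t ω) ^ 2) ℙ)
    (C : ℝ) (hC : 0 < C) (tstar : ℕ) (htstar : 0 < tstar)
    (h2 : ∀ t : ℕ, tstar ≤ t → ∫ ω, (Q t ω) ^ 2 ∂(ℙ : Measure Ω) ≤ C * t)
    (D : ℝ) (hD : 0 < D)
    (hdint : ∀ t, Integrable (fun ω => (Q (t + 1) ω - Q t ω) ^ 2) ℙ)
    (hd : ∀ t, ∫ ω, (Q (t + 1) ω - Q t ω) ^ 2 ∂(ℙ : Measure Ω) ≤ D) :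
    ∀ᵐ ω ∂(ℙ : Measure Ω), Tendsto (fun t : ℕ => Q t ω / (t : ℝ)) atTop (𝓝 0) := by
  classical
  -- Step A : along sampling times, `Q (TT n) ≤ TT n / (k+1)` eventually, a.s.
  have hA : ∀ᵐ ω ∂(ℙ : Measure Ω), ∀ k : ℕ, ∀ᶠ n in atTop,
      Q (TT n) ω ≤ (TT n : ℝ) / ((k:ℝ) + 1) := by
    rw [ae_all_iff]
    intro k
    set sA : ℕ → Set Ω :=
      fun n => {ω | (TT n : ℝ) / ((k:ℝ) + 1) < Q (TT n) ω} with hsA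
    set b : ℕ → ℝ :=
      fun n => if TT n < max tstar 2 then 1 else C * ((k:ℝ)+1)^2 / (TT n : ℝ) with hbdef
    have hb0 : ∀ n, 0 ≤ b n := by
      intro n
      by_cases h : TT n < max tstar 2
      · simp only [hbdef]
        rw [if_pos h]
        norm_num
      · simp only [hbdef, if_neg h]
        positivity
    have hble : ∀ n, (ℙ : Measure Ω) (sA n) ≤ ENNReal.ofReal (b n) := by
      intro n
      by_cases h : TT n < max tstar 2
      · simp only [hbdef, if_pos h]
        calc (ℙ : Measure Ω) (sA n) ≤ 1 := prob_le_one
          _ = ENNReal.ofReal 1 := by norm_num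
      · simp only [hbdef, if_neg h]
        push_neg at h
        have hT2 : 2 ≤ TT n := le_trans (le_max_right _ _) h
        have hTstar : tstar ≤ TT n := le_trans (le_max_left _ _) h
        have hTpos : (0:ℝ) < (TT n : ℝ) := by
          exact_mod_cast lt_of_lt_of_le (by norm_num : (0:ℕ) < 2) hT2
        set lam : ℝ := (TT n : ℝ) / ((k:ℝ) + 1) with hlamdef
        have hlam : 0 < lam := div_pos hTpos (by positivity)
        have hsub : sA n ⊆ {ω | lam^2 < (Q (TT n) ω)^2} := by
          intro ω (hω : lam < Q (TT n) ω)
          exact pow_lt_pow_left₀ hω hlam.le two_ne_zero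
        calc (ℙ : Measure Ω) (sA n)
            ≤ ℙ {ω | lam^2 < (Q (TT n) ω)^2} := measure_mono hsub
          _ ≤ ENNReal.ofReal ((∫ ω, (Q (TT n) ω)^2) / lam^2) :=
              markov (fun ω => sq_nonneg _) (hint2 _) (by positivity)
          _ ≤ ENNReal.ofReal (C * (TT n : ℝ) / lam^2) := by
              apply ENNReal.ofReal_le_ofReal
              gcongr
              exact h2 _ hTstar
          _ = ENNReal.ofReal (C * ((k:ℝ)+1)^2 / (TT n : ℝ)) := by
              congr 1
              rw [hlamdef]
              field_simp
    have hsum : Summable b := by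
      apply summable_aux (p := (3:ℝ)/2) (c := 2*C*((k:ℝ)+1)^2) (by norm_num)
      have hTT : Tendsto TT atTop atTop := tendsto_atTop_mono le_TT tendsto_id
      filter_upwards [hTT.eventually_ge_atTop (max tstar 2), eventually_ge_atTop 2]
        with n h1 hn2
      simp only [hbdef, if_neg (not_lt.mpr h1)]
      have hT32 : (2:ℝ) ≤ (n:ℝ) ^ ((3:ℝ)/2) := by
        have ha : (2:ℝ) ^ ((3:ℝ)/2) ≤ (n:ℝ) ^ ((3:ℝ)/2) :=
          Real.rpow_le_rpow (by norm_num) (by exact_mod_cast hn2) (by norm_num)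
        have hbb : (2:ℝ) ≤ (2:ℝ) ^ ((3:ℝ)/2) := by
          have := Real.rpow_le_rpow_of_exponent_le (x := 2) (by norm_num)
            (show (1:ℝ) ≤ (3:ℝ)/2 by norm_num)
          simpa using this
        linarith
      have hlb : (n:ℝ) ^ ((3:ℝ)/2) / 2 ≤ (TT n : ℝ) := by
        have := rpow_le_TT n
        linarith
      have hTpos : (0:ℝ) < (TT n : ℝ) := lt_of_lt_of_le (by linarith) hlb
      have hnpow : (0:ℝ) < (n:ℝ) ^ ((3:ℝ)/2) := by linarith
      rw [Real.norm_eq_abs, abs_of_nonneg (by positivity)]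
      calc C * ((k:ℝ)+1)^2 / (TT n : ℝ)
          ≤ C * ((k:ℝ)+1)^2 / ((n:ℝ) ^ ((3:ℝ)/2) / 2) := by
            gcongr
          _ = 2*C*((k:ℝ)+1)^2 * (1 / (n:ℝ) ^ ((3:ℝ)/2)) := by
            field_simp
    filter_upwards [borelcantelli hb0 hble hsum] with ω hω
    filter_upwards [hω] with n hn
    exact not_lt.mp hn
  -- Step B : increments are eventually bounded by `s^{3/5}`, a.s.
  have hB : ∀ᵐ ω ∂(ℙ : Measure Ω), ∀ᶠ s in atTop,
      |Q (s+1) ω - Q s ω| ≤ (s:ℝ) ^ ((3:ℝ)/5) := by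
    set u : ℕ → Set Ω :=
      fun s => {ω | (s:ℝ) ^ ((6:ℝ)/5) < (Q (s+1) ω - Q s ω)^2} with hudef
    set b2 : ℕ → ℝ := fun s => if s = 0 then 1 else D / (s:ℝ) ^ ((6:ℝ)/5) with hb2def
    have hb20 : ∀ s, 0 ≤ b2 s := by
      intro s
      by_cases h : s = 0
      · simp [hb2def, h]
      · simp only [hb2def, if_neg h]
        have : (0:ℝ) < (s:ℝ) ^ ((6:ℝ)/5) :=
          Real.rpow_pos_of_pos (by exact_mod_cast Nat.pos_of_ne_zero h) _
        positivity
    have hble2 : ∀ s, (ℙ : Measure Ω) (u s) ≤ ENNReal.ofReal (b2 s) := by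
      intro s
      by_cases h : s = 0
      · simp only [hb2def, if_pos h]
        calc (ℙ : Measure Ω) (u s) ≤ 1 := prob_le_one
          _ = ENNReal.ofReal 1 := by norm_num
      · simp only [hb2def, if_neg h]
        have hspos : (0:ℝ) < (s:ℝ) ^ ((6:ℝ)/5) :=
          Real.rpow_pos_of_pos (by exact_mod_cast Nat.pos_of_ne_zero h) _
        calc (ℙ : Measure Ω) (u s)
            ≤ ENNReal.ofReal ((∫ ω, (Q (s+1) ω - Q s ω)^2) / (s:ℝ) ^ ((6:ℝ)/5)) :=
              markov (fun ω => sq_nonneg _) (hdint s) hspos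
          _ ≤ ENNReal.ofReal (D / (s:ℝ) ^ ((6:ℝ)/5)) := by
              apply ENNReal.ofReal_le_ofReal
              gcongr
              exact hd s
    have hsum2 : Summable b2 := by
      apply summable_aux (p := (6:ℝ)/5) (c := D) (by norm_num)
      filter_upwards [eventually_ge_atTop 1] with s hs1
      have hs0 : s ≠ 0 := by omega
      simp only [hb2def, if_neg hs0]
      have hspos : (0:ℝ) < (s:ℝ) ^ ((6:ℝ)/5) :=
        Real.rpow_pos_of_pos (by exact_mod_cast Nat.pos_of_ne_zero hs0) _
      rw [Real.norm_eq_abs, abs_of_nonneg (by positivity)]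
      rw [div_eq_mul_one_div]
    filter_upwards [borelcantelli hb20 hble2 hsum2] with ω hω
    filter_upwards [hω] with s hs
    have hsq : (Q (s+1) ω - Q s ω)^2 ≤ (s:ℝ) ^ ((6:ℝ)/5) := not_lt.mp hs
    have hsqrt : Real.sqrt ((s:ℝ) ^ ((6:ℝ)/5)) = (s:ℝ) ^ ((3:ℝ)/5) := by
      rw [Real.sqrt_eq_rpow, ← Real.rpow_mul (Nat.cast_nonneg s)]
      norm_num
    calc |Q (s+1) ω - Q s ω| = Real.sqrt ((Q (s+1) ω - Q s ω)^2) :=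
          (Real.sqrt_sq_eq_abs _).symm
      _ ≤ Real.sqrt ((s:ℝ) ^ ((6:ℝ)/5)) := Real.sqrt_le_sqrt hsq
      _ = (s:ℝ) ^ ((3:ℝ)/5) := hsqrt
  -- combine
  filter_upwards [hA, hB] with ω hAω hBω
  exact det (fun t => Q t ω) (fun t => hpos t ω) hAω hBω
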